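/- For the sequence M_n = n!/(n+1)^2 in one variable, there is a constant C > 0 such that for all n ≥ 1, the sum over 1 ≤ j ≤ n−1 of binom(n,j) · M_{n−j} · M_{j+1} is at most C · n · M_n. -/

import Mathlib

/-- `M n = n!/(n+1)^2`. -/
noncomputable def Mseq (n : ℕ) : ℝ := (n.factorial : ℝ) / ((n : ℝ) + 1) ^ 2

private lemma core_ineq (m x : ℝ) (h1 : 1 ≤ x) (h2 : x ≤ m - 1) :
    (x+1)/((m-x+1)^2*(x+2)^2) ≤ 1/(m+1)*(1/(m-x+1)^2 + 1/(2*(m+1))) := by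
  have hA : (0:ℝ) < m - x + 1 := by linarith
  have hB : (0:ℝ) < x + 2 := by linarith
  have hm : (0:ℝ) < m + 1 := by linarith
  rw [div_le_iff₀ (by positivity)]
  have key : 2*(m+1)^2*(x+1) ≤ 2*(m+1)*(x+2)^2 + (m-x+1)^2*(x+2)^2 := by
    nlinarith [mul_nonneg (by linarith : (0:ℝ) ≤ m - x + 1 - 2) (by linarith : (0:ℝ) ≤ m - (m-x+1)),
      mul_nonneg (mul_nonneg (by linarith : (0:ℝ) ≤ m-x+1-2) (by linarith : (0:ℝ) ≤ m-(m-x+1))) (by linarith : (0:ℝ) ≤ x+2)]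
  have e : 1/(m+1)*(1/(m-x+1)^2 + 1/(2*(m+1))) * ((m-x+1)^2*(x+2)^2)
      = (2*(m+1)*(x+2)^2 + (m-x+1)^2*(x+2)^2) / (2*(m+1)^2) := by
    field_simp
  rw [e, le_div_iff₀ (by positivity)]
  nlinarith [key]

private lemma sum_inv_sq (n : ℕ) (hn : 1 ≤ n) :
    ∑ j ∈ Finset.Ico 1 n, (1:ℝ)/((j:ℝ)+1)^2 ≤ 1 - 1/((n:ℝ)) := by
  induction n, hn using Nat.le_induction with
  | base => simp
  | succ n hn ih =>
    rw [Finset.sum_Ico_succ_top (by omega)]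
    have h1 : (1:ℝ)/((n:ℝ)+1)^2 ≤ 1/(n:ℝ) - 1/((n:ℝ)+1) := by
      have hn' : (0:ℝ) < n := by exact_mod_cast hn
      rw [div_sub_div _ _ (by positivity) (by positivity),
        div_le_div_iff₀ (by positivity) (by positivity)]
      ring_nf; nlinarith
    push_cast
    linarith

private lemma sum_reflect (n : ℕ) :
    ∑ j ∈ Finset.Ico 1 n, (1:ℝ)/(((n - j : ℕ):ℝ)+1)^2
      = ∑ j ∈ Finset.Ico 1 n, (1:ℝ)/((j:ℝ)+1)^2 := by
  apply Finset.sum_nbij' (i := fun j => n - j) (j := fun j => n - j)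
  · intro a ha
    simp only [Finset.mem_Ico] at ha ⊢
    omega
  · intro a ha
    simp only [Finset.mem_Ico] at ha ⊢
    omega
  · intro a ha
    simp only [Finset.mem_Ico] at ha
    omega
  · intro a ha
    simp only [Finset.mem_Ico] at ha
    omega
  · intro a ha
    rfl

/-- There is `C > 0` such that for all `n ≥ 1`,
`∑_{j=1}^{n-1} binom(n,j) M_{n-j} M_{j+1} ≤ C n M_n`. -/
theorem stmt1 :
    ∃ C : ℝ, 0 < C ∧ ∀ n : ℕ, 1 ≤ n →
      ∑ j ∈ Finset.Ico 1 n, ((n.choose j : ℕ) : ℝ) * Mseq (n - j) * Mseq (j + 1)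
        ≤ C * n * Mseq n := by
  refine ⟨3, by norm_num, ?_⟩
  intro n hn
  set m : ℝ := (n : ℝ) with hm
  have hm1 : (1:ℝ) ≤ m := by rw [hm]; exact_mod_cast hn
  have hF : (0:ℝ) < (n.factorial : ℝ) := by positivity
  have key : ∀ j ∈ Finset.Ico 1 n,
      ((n.choose j : ℕ) : ℝ) * Mseq (n - j) * Mseq (j + 1)
        ≤ (n.factorial : ℝ)/(m+1) * (1/(((n - j : ℕ):ℝ)+1)^2 + 1/(2*(m+1))) := by
    intro j hj
    rw [Finset.mem_Ico] at hj
    obtain ⟨hj1, hjn⟩ := hj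
    have hfac : n.choose j * (n-j).factorial * (j+1).factorial = n.factorial * (j+1) := by
      have h1 := Nat.choose_mul_factorial_mul_factorial hjn.le
      calc n.choose j * (n-j).factorial * (j+1).factorial
          = (n.choose j * j.factorial * (n-j).factorial) * (j+1) := by
            rw [Nat.factorial_succ]; ring
        _ = n.factorial * (j+1) := by rw [h1]
    have hcast : ((n - j : ℕ):ℝ) = m - (j:ℝ) := by
      rw [hm]; exact_mod_cast Nat.cast_sub hjn.le
    have hx1 : (1:ℝ) ≤ (j:ℝ) := by exact_mod_cast hj1
    have hx2 : (j:ℝ) ≤ m - 1 := by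
      have h' : (j:ℝ) + 1 ≤ (n:ℝ) := by exact_mod_cast hjn
      rw [hm]; linarith
    have hA : (0:ℝ) < m - (j:ℝ) + 1 := by linarith
    have hB : (0:ℝ) < (j:ℝ) + 2 := by linarith
    have hcR : ((n.choose j : ℕ) : ℝ) * (((n-j).factorial : ℕ) : ℝ) * (((j+1).factorial : ℕ) : ℝ)
        = (n.factorial:ℝ) * ((j:ℝ)+1) := by exact_mod_cast hfac
    have hterm : ((n.choose j : ℕ) : ℝ) * Mseq (n - j) * Mseq (j + 1)
        = ((n.factorial:ℝ) * ((j:ℝ)+1)) / ((m-(j:ℝ)+1)^2 * ((j:ℝ)+2)^2) := by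
      have hA' : (m - (j:ℝ) + 1) ≠ 0 := hA.ne'
      have hB' : ((j:ℝ) + 2) ≠ 0 := hB.ne'
      unfold Mseq
      rw [hcast]
      push_cast
      push_cast at hcR
      field_simp
      linear_combination hcR * (((j:ℝ)+2)^2)
    rw [hterm, hcast]
    have h := core_ineq m (j:ℝ) hx1 hx2
    calc (n.factorial:ℝ) * ((j:ℝ)+1) / ((m-(j:ℝ)+1)^2 * ((j:ℝ)+2)^2)
        = (n.factorial:ℝ) * (((j:ℝ)+1) / ((m-(j:ℝ)+1)^2 * ((j:ℝ)+2)^2)) := by ring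
      _ ≤ (n.factorial:ℝ) * (1/(m+1)*(1/(m-(j:ℝ)+1)^2 + 1/(2*(m+1)))) :=
          mul_le_mul_of_nonneg_left h hF.le
      _ = (n.factorial : ℝ)/(m+1) * (1/(m-(j:ℝ)+1)^2 + 1/(2*(m+1))) := by ring
  have hsum := Finset.sum_le_sum key
  have hS : ∑ j ∈ Finset.Ico 1 n, (1:ℝ)/(((n - j : ℕ):ℝ)+1)^2 ≤ 1 := by
    rw [sum_reflect]
    have := sum_inv_sq n hn
    have : (0:ℝ) < 1/m := by positivity
    linarith [sum_inv_sq n hn]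
  have hcard : ((Finset.Ico 1 n).card : ℝ) = m - 1 := by
    rw [Nat.card_Ico, Nat.cast_sub hn]
    simp [hm]
  have heq : ∑ j ∈ Finset.Ico 1 n,
      (n.factorial : ℝ)/(m+1) * (1/(((n - j : ℕ):ℝ)+1)^2 + 1/(2*(m+1)))
      = (n.factorial : ℝ)/(m+1) * ((∑ j ∈ Finset.Ico 1 n, (1:ℝ)/(((n - j : ℕ):ℝ)+1)^2)
          + (m-1) * (1/(2*(m+1)))) := by
    rw [← Finset.mul_sum, Finset.sum_add_distrib, Finset.sum_const, nsmul_eq_mul, hcard]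
  have hmono : (n.factorial : ℝ)/(m+1) * ((∑ j ∈ Finset.Ico 1 n, (1:ℝ)/(((n - j : ℕ):ℝ)+1)^2)
          + (m-1) * (1/(2*(m+1))))
      ≤ (n.factorial : ℝ)/(m+1) * (1 + (m-1) * (1/(2*(m+1)))) := by
    apply mul_le_mul_of_nonneg_left _ (by positivity)
    linarith
  have hfin : (n.factorial : ℝ)/(m+1) * (1 + (m-1) * (1/(2*(m+1)))) ≤ 3 * m * Mseq n := by
    unfold Mseq
    rw [← hm]
    rw [show (3:ℝ) * m * ((n.factorial:ℝ)/(m+1)^2) = (n.factorial:ℝ) * (3*m/(m+1)^2) by ring,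
      show (n.factorial : ℝ)/(m+1) * (1 + (m-1) * (1/(2*(m+1))))
        = (n.factorial:ℝ) * (1/(m+1) * (1 + (m-1) * (1/(2*(m+1))))) by ring]
    apply mul_le_mul_of_nonneg_left _ hF.le
    rw [show 1/(m+1) * (1 + (m-1) * (1/(2*(m+1)))) = (3*m+1)/(2*(m+1)^2) by field_simp; ring,
      div_le_div_iff₀ (by positivity) (by positivity)]
    nlinarith
  calc ∑ j ∈ Finset.Ico 1 n, ((n.choose j : ℕ) : ℝ) * Mseq (n - j) * Mseq (j + 1)
      ≤ _ := hsum
    _ = _ := heq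
    _ ≤ _ := hmono
    _ ≤ 3 * m * Mseq n := hfin
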